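/- Let τ > 0 be irrational and satisfy |τ − s/q| ≥ δ/q^{2+ε} for all integers s and positive integers q, with δ > 0 and 0 < ε < 1. Then there exists N > 0 such that |sin(πkτ + π/2)| ≥ N/k^{1+ε} for all positive integers k. -/

import Mathlib

open Real

lemma abs_neg_one_zpow' (m : ℤ) : |(-1 : ℝ) ^ m| = 1 := by
  rcases Int.even_or_odd m with h | h
  · rw [h.neg_one_zpow]; norm_num
  · rw [Odd.neg_one_zpow h]; norm_num

theorem stmt8 (τ : ℝ) (hpos : 0 < τ) (hirr : Irrational τ) (δ ε : ℝ)
    (hδ : 0 < δ) (hε0 : 0 < ε) (hε1 : ε < 1)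
    (hdio : ∀ s : ℤ, ∀ q : ℕ, 0 < q → δ / (q : ℝ) ^ (2 + ε) ≤ |τ - (s : ℝ) / q|) :
    ∃ N > (0 : ℝ), ∀ k : ℕ, 0 < k →
      N / (k : ℝ) ^ (1 + ε) ≤ |Real.sin (π * k * τ + π / 2)| := by
  refine ⟨δ / 4, by positivity, fun k hk => ?_⟩
  have hk0 : (0 : ℝ) < k := by exact_mod_cast hk
  set x : ℝ := k * τ with hxdef
  set m : ℤ := ⌊x⌋ with hmdef
  set y : ℝ := x - m - 1/2 with hydef
  have hy2 : |y| ≤ 1/2 := by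
    have h1 := Int.floor_le x
    have h2 := Int.lt_floor_add_one x
    rw [abs_le]; constructor <;> simp only [hydef] <;> nlinarith
  -- Diophantine lower bound on |y|
  have hq : 0 < 2 * k := by omega
  have hdi := hdio (2 * m + 1) (2 * k) hq
  have h2k : ((2 * k : ℕ) : ℝ) = 2 * k := by push_cast; ring
  have hylb : δ / (2 ^ (2 + ε) * (k : ℝ) ^ (1 + ε)) ≤ |y| := by
    have hy : y = k * (τ - ((2 * m + 1 : ℤ) : ℝ) / ((2 * k : ℕ) : ℝ)) := by
      rw [h2k]; push_cast [hydef, hxdef]; field_simp; ring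
    have habs : |y| = k * |τ - ((2 * m + 1 : ℤ) : ℝ) / ((2 * k : ℕ) : ℝ)| := by
      rw [hy, abs_mul, abs_of_pos hk0]
    have hpow : ((2 * k : ℕ) : ℝ) ^ (2 + ε) = 2 ^ (2 + ε) * (k : ℝ) ^ (2 + ε) := by
      rw [h2k, Real.mul_rpow (by norm_num) (le_of_lt hk0)]
    have hk21 : (k : ℝ) ^ (2 + ε) = (k : ℝ) * (k : ℝ) ^ (1 + ε) := by
      rw [← Real.rpow_one_add' (le_of_lt hk0) (by positivity)]; ring_nf
    have hkpow : (0 : ℝ) < (k : ℝ) ^ (1 + ε) := Real.rpow_pos_of_pos hk0 _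
    calc δ / (2 ^ (2 + ε) * (k : ℝ) ^ (1 + ε))
        = k * (δ / ((2 * k : ℕ) : ℝ) ^ (2 + ε)) := by
          rw [hpow, hk21]; field_simp
      _ ≤ |y| := by rw [habs]; exact mul_le_mul_of_nonneg_left hdi (le_of_lt hk0)
  -- rewrite the sine
  have hsin : |Real.sin (π * k * τ + π / 2)| = |Real.sin (π * y)| := by
    have hx : π * k * τ + π / 2 = m * π - (-(π * y) - π) := by
      simp only [hydef, hxdef]; ring
    have hss : Real.sin (-(π * y) - π) = Real.sin (π * y) := by
      rw [Real.sin_sub_pi, Real.sin_neg]; ring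
    rw [hx, Real.sin_int_mul_pi_sub, hss, abs_neg, abs_mul]
    rw [abs_neg_one_zpow' m, one_mul]
  rw [hsin]
  -- |sin(πy)| ≥ 2|y|
  have hsge : 2 * |y| ≤ |Real.sin (π * y)| := by
    have h1 : π * |y| ≤ π / 2 := by
      nlinarith [Real.pi_pos, hy2, abs_nonneg y]
    have h2 : 2 / π * (π * |y|) ≤ Real.sin (π * |y|) :=
      Real.mul_le_sin (by positivity) h1
    have h3 : Real.sin (π * |y|) = |Real.sin (π * y)| := by
      rcases abs_cases y with ⟨h, _⟩ | ⟨h, hneg⟩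
      · rw [h, abs_of_nonneg]
        exact Real.sin_nonneg_of_nonneg_of_le_pi (by positivity) (by nlinarith [Real.pi_pos])
      · have hnn : (0:ℝ) ≤ Real.sin (π * (-y)) :=
          Real.sin_nonneg_of_nonneg_of_le_pi (by nlinarith [Real.pi_pos]) (by nlinarith [Real.pi_pos])
        rw [mul_neg, Real.sin_neg] at hnn
        rw [h, mul_neg, Real.sin_neg, abs_of_nonpos (by linarith)]
    calc 2 * |y| = 2 / π * (π * |y|) := by field_simp
      _ ≤ Real.sin (π * |y|) := h2
      _ = |Real.sin (π * y)| := h3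
  -- conclude
  have hfin : δ / 4 / (k : ℝ) ^ (1 + ε) ≤ 2 * |y| := by
    have hkpow : (0 : ℝ) < (k : ℝ) ^ (1 + ε) := Real.rpow_pos_of_pos hk0 _
    have h8 : (2 : ℝ) ^ (2 + ε) ≤ 8 := by
      calc (2 : ℝ) ^ (2 + ε) ≤ 2 ^ (3 : ℝ) :=
          Real.rpow_le_rpow_left_iff one_lt_two |>.2 (by linarith)
        _ = 8 := by norm_num [Real.rpow_natCast 2 3, show ((3:ℕ):ℝ) = (3:ℝ) by norm_num]
    have h2p : (0 : ℝ) < 2 ^ (2 + ε) := Real.rpow_pos_of_pos two_pos _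
    calc δ / 4 / (k : ℝ) ^ (1 + ε) ≤ 2 * (δ / (2 ^ (2 + ε) * (k : ℝ) ^ (1 + ε))) := by
          rw [div_div, div_le_iff₀ (by positivity)]
          have heq : 2 * (δ / (2 ^ (2 + ε) * (k : ℝ) ^ (1 + ε))) * (4 * (k:ℝ) ^ (1+ε))
              = 8 * δ / 2 ^ (2 + ε) := by field_simp; ring
          rw [heq, le_div_iff₀ h2p]
          nlinarith
      _ ≤ 2 * |y| := by linarith [hylb]
  linarith
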